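/- Let p be a complex polynomial of degree n ≥ 2 with exactly d distinct zeroes, 2 ≤ d ≤ n, and let κ ∈ ℂ satisfy κ ≠ (k−1)/k for all k = 1,…,n. Then the number of zeroes (counted with multiplicity) of F_κ[p] = p·p'' − κ(p')² that are not zeroes of p equals 2d − 2. -/

import Mathlib

open Polynomial

open scoped Classical in
lemma F_local_factor (κ a : ℂ) (k : ℕ) (q : ℂ[X]) (hq : q.eval a ≠ 0)
    (hκ : κ * ((k : ℂ) + 1) ≠ k) :
    rootMultiplicity a
      (((X - C a) ^ (k + 1) * q) * derivative (derivative ((X - C a) ^ (k + 1) * q))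
        - C κ * (derivative ((X - C a) ^ (k + 1) * q)) ^ 2) = 2 * k := by
  set t : ℂ[X] := X - C a with ht
  set p : ℂ[X] := t ^ (k + 1) * q with hp
  have hdt : derivative t = 1 := by simp [ht]
  set r : ℂ[X] := C ((k : ℂ) + 1) * q + t * derivative q with hr
  have dp : derivative p = t ^ k * r := by
    rw [hp, derivative_mul, derivative_pow, hdt, hr]
    push_cast
    ring
  have ddp : derivative (derivative p) = C (k : ℂ) * t ^ (k - 1) * r + t ^ k * derivative r := by
    rw [dp, derivative_mul, derivative_pow, hdt]
    ring
  set G : ℂ[X] := C (k : ℂ) * q * r + t * (q * derivative r) - C κ * r ^ 2 with hG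
  have hfact : p * derivative (derivative p) - C κ * (derivative p) ^ 2 = t ^ (2 * k) * G := by
    rw [ddp, dp, hp, hG]
    cases k with
    | zero => push_cast [C_0]; ring
    | succ j =>
      simp only [Nat.succ_sub_one]
      ring
  have hGa : G.eval a ≠ 0 := by
    have hta : t.eval a = 0 := by simp [ht]
    have hra : r.eval a = ((k : ℂ) + 1) * q.eval a := by simp [hr, hta]
    have hGe : G.eval a = ((k : ℂ) + 1) * (q.eval a * q.eval a) * ((k : ℂ) - κ * ((k : ℂ) + 1)) := by
      simp only [hG, eval_sub, eval_add, eval_mul, eval_pow, eval_C, hta, hra]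
      ring
    rw [hGe]
    apply mul_ne_zero (mul_ne_zero (Nat.cast_add_one_ne_zero k) (mul_ne_zero hq hq))
    intro h
    exact hκ (by linear_combination -h)
  have hGne : G ≠ 0 := fun h => hGa (by simp [h])
  rw [hfact, rootMultiplicity_mul (mul_ne_zero (pow_ne_zero _ (X_sub_C_ne_zero a)) hGne),
    rootMultiplicity_X_sub_C_pow, rootMultiplicity_eq_zero (fun h => hGa h), add_zero]

open scoped Classical in
/-- If `p` is a complex polynomial of degree `n ≥ 2` with exactly `d` distinct
zeroes, `2 ≤ d ≤ n`, and `κ ≠ (k−1)/k` for all `k = 1, …, n`, then the number of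
zeroes (with multiplicity) of `F_κ[p] = p·p'' − κ(p')²` which are not zeroes of `p`
equals `2d − 2`. -/
theorem card_nontrivial_roots_F_kappa (p : ℂ[X]) (n d : ℕ) (hn : p.natDegree = n)
    (hn2 : 2 ≤ n) (hd : p.roots.toFinset.card = d) (hd2 : 2 ≤ d) (hdn : d ≤ n)
    (κ : ℂ) (hκ : ∀ k : ℕ, 1 ≤ k → k ≤ n → κ ≠ ((k : ℂ) - 1) / k) :
    Multiset.card
      ((p * derivative (derivative p) - C κ * (derivative p) ^ 2).roots.filter
        (fun z => p.eval z ≠ 0)) = 2 * d - 2 := by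
  have hp0 : p ≠ 0 := fun h => by simp [h] at hn; omega
  set F : ℂ[X] := p * derivative (derivative p) - C κ * (derivative p) ^ 2 with hF
  have hd1 : (derivative p).natDegree ≤ n - 1 := by
    have := natDegree_derivative_le p; omega
  have hd2' : (derivative (derivative p)).natDegree ≤ n - 2 := by
    have h1 := natDegree_derivative_le (derivative p)
    have := natDegree_derivative_le p
    omega
  have hc1 : (derivative p).coeff (n - 1) = p.coeff n * n := by
    rw [coeff_derivative]
    have e : n - 1 + 1 = n := by omega
    rw [e]
    congr 1
    push_cast [Nat.cast_sub (by omega : 1 ≤ n)]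
    ring
  have hc2 : (derivative (derivative p)).coeff (n - 2) = p.coeff n * n * ((n : ℂ) - 1) := by
    rw [coeff_derivative]
    have e : n - 2 + 1 = n - 1 := by omega
    rw [e, hc1]
    push_cast [Nat.cast_sub (by omega : 2 ≤ n), Nat.cast_sub (by omega : 1 ≤ n)]
    ring
  have hctop : F.coeff (2 * n - 2)
      = p.coeff n * (p.coeff n * n * ((n : ℂ) - 1)) - κ * (p.coeff n * n) ^ 2 := by
    rw [hF, coeff_sub]
    have e1 : 2 * n - 2 = n + (n - 2) := by omega
    have e2 : 2 * n - 2 = (n - 1) + (n - 1) := by omega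
    have h1 : (p * derivative (derivative p)).coeff (2 * n - 2)
        = p.coeff n * (p.coeff n * n * ((n : ℂ) - 1)) := by
      rw [e1, coeff_mul_add_eq_of_natDegree_le (le_of_eq hn) hd2', hc2]
    have h2 : (C κ * (derivative p) ^ 2).coeff (2 * n - 2) = κ * (p.coeff n * n) ^ 2 := by
      rw [coeff_C_mul, sq, sq, e2, coeff_mul_add_eq_of_natDegree_le hd1 hd1, hc1]
    rw [h1, h2]
  have hcn : p.coeff n ≠ 0 := by
    rw [← hn]; exact fun h => hp0 (leadingCoeff_eq_zero.mp h)
  have hn0 : (n : ℂ) ≠ 0 := Nat.cast_ne_zero.mpr (by omega)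
  have hc0 : F.coeff (2 * n - 2) ≠ 0 := by
    rw [hctop]
    intro h
    apply hκ n (by omega) le_rfl
    rw [eq_div_iff hn0]
    have hne : p.coeff n * p.coeff n * n ≠ 0 := mul_ne_zero (mul_ne_zero hcn hcn) hn0
    rcases mul_eq_zero.mp (by linear_combination h :
        p.coeff n * p.coeff n * (n : ℂ) * ((n : ℂ) - 1 - κ * n) = 0) with h' | h'
    · exact absurd h' hne
    · linear_combination -h'
  have hFne : F ≠ 0 := fun h => hc0 (by simp [h])
  have hdegle : F.natDegree ≤ 2 * n - 2 := by
    refine le_trans (natDegree_sub_le _ _) (max_le ?_ ?_)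
    · exact le_trans natDegree_mul_le (by omega)
    · refine le_trans natDegree_mul_le ?_
      have h2 : ((derivative p) ^ 2).natDegree = 2 * (derivative p).natDegree :=
        natDegree_pow _ _
      simp only [natDegree_C]
      omega
  have hFdeg : F.natDegree = 2 * n - 2 :=
    le_antisymm hdegle (le_natDegree_of_ne_zero hc0)
  have hcardF : Multiset.card F.roots = 2 * n - 2 := by
    rw [(splits_iff_card_roots).mp (IsAlgClosed.splits F), hFdeg]
  have hmult : ∀ a : ℂ, p.eval a = 0 →
      rootMultiplicity a F = 2 * rootMultiplicity a p - 2 := by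
    intro a ha
    set m := rootMultiplicity a p with hm
    have hm1 : 1 ≤ m := (rootMultiplicity_pos hp0).mpr ha
    have hmn : m ≤ n := by
      have hdvd := pow_rootMultiplicity_dvd p a
      have hle := natDegree_le_of_dvd hdvd hp0
      rwa [natDegree_pow, natDegree_X_sub_C, mul_one, hn, ← hm] at hle
    obtain ⟨q, hq, hndvd⟩ := exists_eq_pow_rootMultiplicity_mul_and_not_dvd p hp0 a
    have hqa : q.eval a ≠ 0 := fun h => hndvd (dvd_iff_isRoot.mpr h)
    obtain ⟨k, hk⟩ : ∃ k, m = k + 1 := ⟨m - 1, by omega⟩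
    have hκ' : κ * ((k : ℂ) + 1) ≠ k := by
      intro h
      apply hκ (k + 1) (by omega) (by omega)
      rw [eq_div_iff (Nat.cast_ne_zero.mpr (by omega : k + 1 ≠ 0))]
      push_cast
      linear_combination h
    have key := F_local_factor κ a k q hqa hκ'
    rw [← hm, hk] at hq
    have : rootMultiplicity a F = 2 * k := by rw [hF, hq]; exact key
    omega
  set T := p.roots.toFinset with hT
  set S := F.roots.filter (fun z => p.eval z = 0) with hS
  have hfilt : F.roots.filter (fun z => ¬ p.eval z ≠ 0) = S := by
    rw [hS]; exact Multiset.filter_congr (fun x _ => by tauto)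
  have hsplit : Multiset.card (F.roots.filter (fun z => p.eval z ≠ 0)) + Multiset.card S
      = 2 * n - 2 := by
    rw [← hcardF, ← Multiset.card_add, ← hfilt, Multiset.filter_add_not]
  have hsub : S.toFinset ⊆ T := by
    intro a haS
    rw [Multiset.mem_toFinset, hS, Multiset.mem_filter] at haS
    rw [hT, Multiset.mem_toFinset, mem_roots hp0]
    exact haS.2
  have hScount : ∀ a ∈ T, S.count a = 2 * rootMultiplicity a p - 2 := by
    intro a haT
    have ha : p.eval a = 0 := by
      rw [hT, Multiset.mem_toFinset, mem_roots hp0] at haT; exact haT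
    rw [hS, Multiset.count_filter, if_pos ha, count_roots, hmult a ha]
  have hcardS : Multiset.card S = ∑ a ∈ T, (2 * rootMultiplicity a p - 2) := by
    rw [← Multiset.toFinset_sum_count_eq S,
      Finset.sum_subset hsub (fun x _ hx => Multiset.count_eq_zero.mpr
        (fun h => hx (Multiset.mem_toFinset.mpr h)))]
    exact Finset.sum_congr rfl hScount
  have hsummult : ∑ a ∈ T, rootMultiplicity a p = n := by
    have h := Multiset.toFinset_sum_count_eq p.roots
    rw [(splits_iff_card_roots).mp (IsAlgClosed.splits p), hn] at h
    rw [← h]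
    exact Finset.sum_congr rfl (fun a _ => (count_roots p).symm)
  have hsum2 : (∑ a ∈ T, (2 * rootMultiplicity a p - 2)) + 2 * d = 2 * n := by
    have h1 : ∀ a ∈ T, 1 ≤ rootMultiplicity a p := by
      intro a haT
      rw [hT, Multiset.mem_toFinset, mem_roots hp0] at haT
      exact (rootMultiplicity_pos hp0).mpr haT
    calc (∑ a ∈ T, (2 * rootMultiplicity a p - 2)) + 2 * d
        = (∑ a ∈ T, (2 * rootMultiplicity a p - 2)) + ∑ _a ∈ T, 2 := by
          rw [Finset.sum_const, ← hd, hT, smul_eq_mul, mul_comm]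
      _ = ∑ a ∈ T, ((2 * rootMultiplicity a p - 2) + 2) := Finset.sum_add_distrib.symm
      _ = ∑ a ∈ T, 2 * rootMultiplicity a p :=
          Finset.sum_congr rfl (fun a ha => by have := h1 a ha; omega)
      _ = 2 * ∑ a ∈ T, rootMultiplicity a p := by rw [Finset.mul_sum]
      _ = 2 * n := by rw [hsummult]
  rw [hcardS] at hsplit
  omega
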